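/- Let V be a real Hilbert space, a : V × V → ℝ bilinear, bounded with constant M, coercive with constant γ, ℓ ∈ V*, and u* the Lax–Milgram solution of a(u*,·) = ℓ. Let {φ_k} be an orthonormal basis of V and define the truncated loss L_N(u) = Σ_{k=1}^N |a(u,φ_k) − ℓ(φ_k)|². Then for every u ∈ V, L_N(u) ≤ M² ‖u − u*‖²_V, and L_N(u) → ‖R(u)‖²_{V*} ≥ γ² ‖u − u*‖²_V as N → ∞. In particular, if a sequence u_m satisfies ‖R(u_m)‖_{V*} → 0, then u_m → u* in V. -/

import Mathlib

open Filter

/-- Equivalence of the truncated variational loss with the error: with `a`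
bounded (M) and coercive (γ), `u*` the exact solution, `{φ_k}` an orthonormal
basis and `L_N(u) = Σ_{k<N} |a(u,φ_k) − ℓ(φ_k)|²`, one has
`L_N(u) ≤ M²‖u−u*‖²`, `L_N(u) → ‖R(u)‖²_{V*} ≥ γ²‖u−u*‖²`, and any sequence
with vanishing residual norm converges to `u*`. -/
theorem stmt_10 {V : Type*} [NormedAddCommGroup V] [InnerProductSpace ℝ V]
    [CompleteSpace V]
    (a : V →ₗ[ℝ] V →ₗ[ℝ] ℝ) (M γ : ℝ) (hM : 0 < M) (hγ : 0 < γ)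
    (hbdd : ∀ w v : V, |a w v| ≤ M * ‖w‖ * ‖v‖)
    (hcoer : ∀ v : V, γ * ‖v‖ ^ 2 ≤ a v v)
    (ℓ : V →L[ℝ] ℝ) (ustar : V) (hustar : ∀ v : V, a ustar v = ℓ v)
    (φ : HilbertBasis ℕ ℝ V)
    (R : V → V →L[ℝ] ℝ) (hR : ∀ u v : V, R u v = a u v - ℓ v) :
    (∀ (u : V) (N : ℕ),
        ∑ k ∈ Finset.range N, |a u (φ k) - ℓ (φ k)| ^ 2 ≤ M ^ 2 * ‖u - ustar‖ ^ 2) ∧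
    (∀ u : V,
        Tendsto (fun N => ∑ k ∈ Finset.range N, |a u (φ k) - ℓ (φ k)| ^ 2)
          atTop (nhds (‖R u‖ ^ 2)) ∧
        γ ^ 2 * ‖u - ustar‖ ^ 2 ≤ ‖R u‖ ^ 2) ∧
    (∀ um : ℕ → V, Tendsto (fun m => ‖R (um m)‖) atTop (nhds 0) →
        Tendsto um atTop (nhds ustar)) := by
  have hsub : ∀ u v : V, R u v = a (u - ustar) v := by
    intro u v
    rw [hR, map_sub, LinearMap.sub_apply, hustar]
  have key : ∀ u : V, HasSum (fun k => |a u (φ k) - ℓ (φ k)| ^ 2) (‖R u‖ ^ 2) := by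
    intro u
    set w := (InnerProductSpace.toDual ℝ V).symm (R u) with hw
    have hwv : ∀ v, (inner ℝ w v : ℝ) = R u v := fun v =>
      InnerProductSpace.toDual_symm_apply
    have hnorm : ‖w‖ = ‖R u‖ := LinearIsometryEquiv.norm_map _ _
    have h := φ.hasSum_inner_mul_inner w w
    have h1 : (fun k => |a u (φ k) - ℓ (φ k)| ^ 2)
        = fun k => (inner ℝ w (φ k) : ℝ) * inner ℝ (φ k) w := by
      funext k
      rw [sq_abs, ← hR, ← hwv (φ k), real_inner_comm w (φ k)]; ring
    have h2 : (‖R u‖ : ℝ) ^ 2 = (inner ℝ w w : ℝ) := by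
      rw [real_inner_self_eq_norm_sq, hnorm]
    rw [h1, h2]; exact h
  have hRnorm : ∀ u, ‖R u‖ ≤ M * ‖u - ustar‖ := by
    intro u
    apply ContinuousLinearMap.opNorm_le_bound _ (by positivity)
    intro v
    rw [Real.norm_eq_abs, hsub]
    exact hbdd _ _
  have hlow : ∀ u, γ * ‖u - ustar‖ ≤ ‖R u‖ := by
    intro u
    rcases eq_or_ne u ustar with h | h
    · simp [h, norm_nonneg]
    · have hpos : 0 < ‖u - ustar‖ := by
        rw [norm_pos_iff, sub_ne_zero]; exact h
      have h1 : γ * ‖u - ustar‖ ^ 2 ≤ a (u - ustar) (u - ustar) := hcoer _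
      have h2 : a (u - ustar) (u - ustar) = R u (u - ustar) := (hsub u _).symm
      have h3 : |R u (u - ustar)| ≤ ‖R u‖ * ‖u - ustar‖ := by
        simpa [Real.norm_eq_abs] using (R u).le_opNorm (u - ustar)
      have h4 : R u (u - ustar) ≤ |R u (u - ustar)| := le_abs_self _
      nlinarith
  refine ⟨?_, ?_, ?_⟩
  · intro u N
    have h1 : ∑ k ∈ Finset.range N, |a u (φ k) - ℓ (φ k)| ^ 2 ≤ ‖R u‖ ^ 2 :=
      sum_le_hasSum _ (fun k _ => by positivity) (key u)
    have h2 := hRnorm u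
    nlinarith [norm_nonneg (R u), norm_nonneg (u - ustar)]
  · intro u
    refine ⟨(key u).tendsto_sum_nat, ?_⟩
    have := hlow u
    nlinarith [this, mul_nonneg hγ.le (norm_nonneg (u - ustar)), norm_nonneg (R u)]
  · intro um hum
    rw [tendsto_iff_norm_sub_tendsto_zero]
    have hb : ∀ m, ‖um m - ustar‖ ≤ γ⁻¹ * ‖R (um m)‖ := by
      intro m
      have h := mul_le_mul_of_nonneg_left (hlow (um m)) (inv_nonneg.2 hγ.le)
      rwa [← mul_assoc, inv_mul_cancel₀ hγ.ne', one_mul] at h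
    have ht : Tendsto (fun m => γ⁻¹ * ‖R (um m)‖) atTop (nhds 0) := by
      simpa using hum.const_mul γ⁻¹
    exact squeeze_zero (fun m => norm_nonneg _) hb ht
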